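/- (Containment direction of the main theorem) Let f₀, …, f_n ∈ K[x₁,…,x_d] be nonzero polynomials with supports A₀, …, A_n ⊂ (ℤ_{≥0})^d, and let ff = (f₁/f₀, …, f_n/f₀). For every σ ∈ (KK*)^d with all fᵢ(σ) ≠ 0, the valuation vector val(ff(σ)) ∈ ℝ^n lies in one of the cones C_J = {ψ(α) + u : α ∈ τ_J, u ∈ (ℝ_{≥0})^J} (for 0 ∉ J), or C_J = {ψ(α) + u − λ·(1,…,1) : α ∈ τ_J, u ∈ (ℝ_{≥0})^{J∖{0}}, λ ≥ 0} (for 0 ∈ J), where J is the set of indices i for which init_α(fᵢ) vanishes at the initial coefficient vector of σ and α = val(σ). Here τ_J = {α : dim(Σ_{j∈K} face_α(conv(Aⱼ))) ≥ |K| for all K ⊆ J}. -/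

import Mathlib

open scoped Classical
open Pointwise

/-- `m_α(f)`: the minimum of `⟨α, q⟩` over the support of the polynomial `f`. -/
noncomputable def mPoly {K : Type*} [CommRing K] {d : ℕ} (α : Fin d → ℝ)
    (f : MvPolynomial (Fin d) K) : ℝ :=
  sInf ((fun q : Fin d →₀ ℕ => ∑ i, α i * (q i : ℝ)) '' (f.support : Set (Fin d →₀ ℕ)))

/-- The initial form `init_α(f)`. -/
noncomputable def initMv {K : Type*} [CommRing K] {d : ℕ} (α : Fin d → ℝ)
    (f : MvPolynomial (Fin d) K) : MvPolynomial (Fin d) K :=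
  ∑ q ∈ f.support.filter
      (fun q => ∀ p ∈ f.support, (∑ i, α i * (q i : ℝ)) ≤ ∑ i, α i * (p i : ℝ)),
    MvPolynomial.monomial q (MvPolynomial.coeff q f)

/-- `face_α` of the support of `f`, as a subset of `ℝ^d`. -/
noncomputable def facePts {K : Type*} [CommRing K] {d : ℕ} (α : Fin d → ℝ)
    (f : MvPolynomial (Fin d) K) : Set (Fin d → ℝ) :=
  (fun q : Fin d →₀ ℕ => fun i => (q i : ℝ)) ''
    {q | q ∈ f.support ∧ ∀ p ∈ f.support,
      (∑ i, α i * (q i : ℝ)) ≤ ∑ i, α i * (p i : ℝ)}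

/-- `(ℝ_{≥0})^J ⊆ ℝ^n`, coordinate `j : Fin n` corresponding to label `j.succ ∈ {0,…,n}`. -/
def orthantJ {n : ℕ} (J : Finset (Fin (n + 1))) : Set (Fin n → ℝ) :=
  {u | ∀ j : Fin n, 0 ≤ u j ∧ (j.succ ∉ J → u j = 0)}

section Helpers

variable {K : Type*} [Field K] {d : ℕ}


lemma leadingCoeff_eq_coeff_order {x : HahnSeries ℝ K} (hx : x ≠ 0) :
    x.leadingCoeff = x.coeff x.order := by
  rw [HahnSeries.leadingCoeff_eq]

lemma pow_facts (x : HahnSeries ℝ K) (hx : x ≠ 0) (k : ℕ) :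
    (x ^ k).leadingCoeff = x.leadingCoeff ^ k := by
  induction k with
  | zero => simp [leadingCoeff_eq_coeff_order (one_ne_zero : (1:HahnSeries ℝ K) ≠ 0)]
  | succ k ih =>
      have h1 : x ^ k ≠ 0 := pow_ne_zero _ hx
      rw [pow_succ, leadingCoeff_eq_coeff_order (mul_ne_zero h1 hx),
        HahnSeries.order_mul h1 hx, HahnSeries.coeff_mul_order_add_order, ih, pow_succ]

lemma prod_facts (σ : Fin d → HahnSeries ℝ K) (hσ : ∀ i, σ i ≠ 0) (q : Fin d →₀ ℕ) :
    (∏ i, σ i ^ q i) ≠ 0 ∧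
    (∏ i, σ i ^ q i).order = ∑ i, (σ i).order * (q i : ℝ) ∧
    (∏ i, σ i ^ q i).leadingCoeff = ∏ i, (σ i).leadingCoeff ^ q i := by
  classical
  induction (Finset.univ : Finset (Fin d)) using Finset.cons_induction with
  | empty => simp [leadingCoeff_eq_coeff_order (one_ne_zero : (1:HahnSeries ℝ K) ≠ 0)]
  | cons a s ha ih =>
      obtain ⟨h0, ho, hl⟩ := ih
      have hxa : σ a ^ q a ≠ 0 := pow_ne_zero _ (hσ a)
      refine ⟨?_, ?_, ?_⟩
      · rw [Finset.prod_cons]; exact mul_ne_zero hxa h0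
      · rw [Finset.prod_cons, HahnSeries.order_mul hxa h0, ho,
          HahnSeries.order_pow, Finset.sum_cons, nsmul_eq_mul, mul_comm]
      · rw [Finset.prod_cons, leadingCoeff_eq_coeff_order (mul_ne_zero hxa h0),
          HahnSeries.order_mul hxa h0, HahnSeries.coeff_mul_order_add_order,
          pow_facts _ (hσ a), hl, Finset.prod_cons]

lemma key_lemma (g : MvPolynomial (Fin d) K) (hg : g ≠ 0)
    (σ : Fin d → HahnSeries ℝ K) (hσ : ∀ i, σ i ≠ 0)
    (α : Fin d → ℝ) (hα : ∀ i, (σ i).order = α i)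
    (b : Fin d → K) (hb : ∀ i, (σ i).coeff (α i) = b i)
    (hgσ : MvPolynomial.aeval σ g ≠ 0) :
    mPoly α g ≤ (MvPolynomial.aeval σ g).order ∧
    (MvPolynomial.eval b (initMv α g) ≠ 0 →
      (MvPolynomial.aeval σ g).order = mPoly α g) := by
  classical
  set E : (Fin d →₀ ℕ) → ℝ := fun q => ∑ i, α i * (q i : ℝ) with hE
  set m := mPoly α g with hm
  have hsupp : g.support.Nonempty := by
    rwa [MvPolynomial.support_nonempty]
  -- basic facts about m
  have hfin : ((fun q : Fin d →₀ ℕ => E q) '' (g.support : Set (Fin d →₀ ℕ))).Finite :=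
    (g.support.finite_toSet).image _
  have hne : ((fun q : Fin d →₀ ℕ => E q) '' (g.support : Set (Fin d →₀ ℕ))).Nonempty :=
    Set.Nonempty.image _ ⟨hsupp.choose, hsupp.choose_spec⟩
  have hmmem : m ∈ (fun q : Fin d →₀ ℕ => E q) '' (g.support : Set (Fin d →₀ ℕ)) :=
    hne.csInf_mem hfin
  have hmle : ∀ q ∈ g.support, m ≤ E q := fun q hq =>
    csInf_le hfin.bddBelow ⟨q, hq, rfl⟩
  -- the terms
  set t : (Fin d →₀ ℕ) → HahnSeries ℝ K :=
    fun q => (algebraMap K (HahnSeries ℝ K)) (g.coeff q) * ∏ i, σ i ^ q i with ht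
  have hsum : MvPolynomial.aeval σ g = ∑ q ∈ g.support, t q := by
    rw [MvPolynomial.aeval_def, MvPolynomial.eval₂_eq']
  have hcoeff : ∀ x : ℝ, (MvPolynomial.aeval σ g).coeff x = ∑ q ∈ g.support, (t q).coeff x := by
    intro x
    rw [hsum]
    exact map_sum (HahnSeries.coeff.addMonoidHom x) t g.support
  -- facts about each term
  have hterm : ∀ q ∈ g.support, t q ≠ 0 ∧ (t q).order = E q ∧
      (t q).coeff (E q) = g.coeff q * ∏ i, b i ^ q i := by
    intro q hq
    have hc : g.coeff q ≠ 0 := MvPolynomial.mem_support_iff.mp hq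
    obtain ⟨hP0, hPo, hPl⟩ := prod_facts σ hσ q
    have halg : (algebraMap K (HahnSeries ℝ K)) (g.coeff q) = HahnSeries.single 0 (g.coeff q) := by
      rw [HahnSeries.algebraMap_apply']
      have h2 : algebraMap K (PowerSeries K) (g.coeff q) = PowerSeries.C (g.coeff q) := rfl
      rw [h2, HahnSeries.ofPowerSeries_C, HahnSeries.C_apply]
    have hs0 : (HahnSeries.single (0:ℝ) (g.coeff q)) ≠ 0 := HahnSeries.single_ne_zero hc
    have hEq : (t q).order = E q := by
      simp only [ht]
      rw [halg, HahnSeries.order_mul hs0 hP0, HahnSeries.order_single hc, hPo, zero_add, hE]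
      simp [hα]
    refine ⟨?_, hEq, ?_⟩
    · simp only [ht]; rw [halg]; exact mul_ne_zero hs0 hP0
    · have := HahnSeries.coeff_mul_order_add_order (HahnSeries.single (0:ℝ) (g.coeff q))
        (∏ i, σ i ^ q i)
      rw [HahnSeries.order_single hc, zero_add, hPo, HahnSeries.leadingCoeff_of_single, hPl] at this
      have hEo : E q = ∑ i, (σ i).order * (q i : ℝ) := by simp [hE, hα]
      simp only [ht]
      rw [halg, hEo, this]
      congr 1
      refine Finset.prod_congr rfl fun i _ => ?_
      rw [leadingCoeff_eq_coeff_order (hσ i), hα i, hb i]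
  -- coefficients below m vanish
  have hlow : ∀ x : ℝ, x < m → (MvPolynomial.aeval σ g).coeff x = 0 := by
    intro x hx
    rw [hcoeff]
    refine Finset.sum_eq_zero fun q hq => ?_
    obtain ⟨h0, ho, _⟩ := hterm q hq
    exact HahnSeries.coeff_eq_zero_of_lt_order (by rw [ho]; exact lt_of_lt_of_le hx (hmle q hq))
  have hge : m ≤ (MvPolynomial.aeval σ g).order := by
    by_contra h
    push_neg at h
    exact (by rw [← HahnSeries.leadingCoeff_eq]; exact HahnSeries.leadingCoeff_ne_zero.mpr hgσ :
      (MvPolynomial.aeval σ g).coeff (MvPolynomial.aeval σ g).order ≠ 0) (hlow _ h)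
  refine ⟨hge, fun hinit => ?_⟩
  -- coefficient at m equals eval b (initMv α g)
  have hcm : (MvPolynomial.aeval σ g).coeff m = MvPolynomial.eval b (initMv α g) := by
    rw [hcoeff, initMv, map_sum]
    rw [← Finset.sum_filter_add_sum_filter_not g.support
      (fun q => ∀ p ∈ g.support, E q ≤ E p) (fun q => (t q).coeff m)]
    have h2 : ∑ q ∈ g.support.filter (fun q => ¬ ∀ p ∈ g.support, E q ≤ E p),
        (t q).coeff m = 0 := by
      refine Finset.sum_eq_zero fun q hq => ?_
      rw [Finset.mem_filter] at hq
      obtain ⟨hq1, hq2⟩ := hq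
      obtain ⟨h0, ho, _⟩ := hterm q hq1
      have : m < E q := by
        rcases lt_or_eq_of_le (hmle q hq1) with h | h
        · exact h
        · exfalso; exact hq2 fun p hp => h ▸ hmle p hp
      exact HahnSeries.coeff_eq_zero_of_lt_order (by rw [ho]; exact this)
    rw [h2, add_zero]
    refine Finset.sum_congr rfl fun q hq => ?_
    rw [Finset.mem_filter] at hq
    obtain ⟨hq1, hq2⟩ := hq
    obtain ⟨_, _, hcq⟩ := hterm q hq1
    have hEm : E q = m := by
      obtain ⟨p, hp, hpE⟩ := hmmem
      exact le_antisymm (hpE ▸ hq2 p hp) (hmle q hq1)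
    rw [← hEm] at *
    rw [hcq, MvPolynomial.eval_monomial]
    congr 1
    rw [Finsupp.prod_pow]
  have hle : (MvPolynomial.aeval σ g).order ≤ m :=
    HahnSeries.order_le_of_coeff_ne_zero (by rw [hcm]; exact hinit)
  exact le_antisymm hle hge

end Helpers

/-- containment direction of the main theorem: let `σ ∈ (KK*)^d` with
`α = val(σ)` and initial coefficient vector `b`, with all `fᵢ(σ) ≠ 0`.  Let `J` be the set
of indices `i` with `init_α(fᵢ)(b) = 0`, and assume `α ∈ τ_J` (every subfamily of faces
indexed by `K ⊆ J` has `dim(∑ face_α(conv A_j)) ≥ |K|`).  Then the valuation vector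
`val(ff(σ)) = (val f₁(σ) − val f₀(σ), …)` lies in the cone `C_J`: it equals `ψ(α) + u`
with `u ∈ (ℝ_{≥0})^J` if `0 ∉ J`, and `ψ(α) + u − λ·(1,…,1)` with `u ∈ (ℝ_{≥0})^{J∖{0}}`,
`λ ≥ 0`, if `0 ∈ J`. -/
theorem stmt18 {K : Type*} [Field K] [IsAlgClosed K] [CharZero K] {d n : ℕ}
    (f : Fin (n + 1) → MvPolynomial (Fin d) K) (hf : ∀ i, f i ≠ 0)
    (σ : Fin d → HahnSeries ℝ K) (hσ : ∀ i, σ i ≠ 0)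
    (α : Fin d → ℝ) (hα : ∀ i, (σ i).order = α i)
    (b : Fin d → K) (hb : ∀ i, (σ i).coeff (α i) = b i) (hbne : ∀ i, b i ≠ 0)
    (hfσ : ∀ i, MvPolynomial.aeval σ (f i) ≠ 0)
    (J : Finset (Fin (n + 1)))
    (hJ : J = Finset.univ.filter (fun i => MvPolynomial.eval b (initMv α (f i)) = 0))
    (hτ : ∀ S ⊆ J, S.card ≤ Module.finrank ℝ (vectorSpan ℝ
      (∑ j ∈ S, convexHull ℝ (facePts α (f j))))) :
    (0 ∉ J → ∃ u ∈ orthantJ J,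
      (fun i : Fin n => (MvPolynomial.aeval σ (f i.succ)).order -
        (MvPolynomial.aeval σ (f 0)).order) =
      (fun i : Fin n => mPoly α (f i.succ) - mPoly α (f 0)) + u) ∧
    (0 ∈ J → ∃ u ∈ orthantJ (J.erase 0), ∃ l : ℝ, 0 ≤ l ∧
      (fun i : Fin n => (MvPolynomial.aeval σ (f i.succ)).order -
        (MvPolynomial.aeval σ (f 0)).order) =
      (fun i : Fin n => mPoly α (f i.succ) - mPoly α (f 0)) + u - l • (1 : Fin n → ℝ)) := by
  
  classical
  have hv : ∀ i, mPoly α (f i) ≤ (MvPolynomial.aeval σ (f i)).order ∧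
      (MvPolynomial.eval b (initMv α (f i)) ≠ 0 →
        (MvPolynomial.aeval σ (f i)).order = mPoly α (f i)) :=
    fun i => key_lemma (f i) (hf i) σ hσ α hα b hb (hfσ i)
  have hnotJ : ∀ i, i ∉ J → (MvPolynomial.aeval σ (f i)).order = mPoly α (f i) := by
    intro i hi
    refine (hv i).2 ?_
    rw [hJ] at hi
    simpa using hi
  constructor
  · intro h0
    refine ⟨fun j => (MvPolynomial.aeval σ (f j.succ)).order - mPoly α (f j.succ), ?_, ?_⟩
    · intro j
      refine ⟨sub_nonneg.mpr (hv j.succ).1, fun hj => sub_eq_zero_of_eq (hnotJ _ hj)⟩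
    · funext j
      simp only [Pi.add_apply]
      rw [hnotJ 0 h0]
      ring
  · intro h0
    refine ⟨fun j => (MvPolynomial.aeval σ (f j.succ)).order - mPoly α (f j.succ), ?_,
      (MvPolynomial.aeval σ (f 0)).order - mPoly α (f 0), sub_nonneg.mpr (hv 0).1, ?_⟩
    · intro j
      refine ⟨sub_nonneg.mpr (hv j.succ).1, fun hj => ?_⟩
      have hjn : j.succ ∉ J := fun hmem =>
        hj (Finset.mem_erase.mpr ⟨Fin.succ_ne_zero j, hmem⟩)
      exact sub_eq_zero_of_eq (hnotJ _ hjn)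
    · funext j
      simp only [Pi.add_apply, Pi.sub_apply, Pi.smul_apply, Pi.one_apply, smul_eq_mul, mul_one]
      ring
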